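/- Let $T_1, T_2, T_3$ be real numbers and consider the system $2 x_2 x_3/(v_2 v_3) = c T_1$, $2 x_1 x_3/(v_1 v_3) = c T_2$, $2 x_1 x_2/(v_1 v_2) = c T_3$ in unknowns $v_1, v_2, v_3, c > 0$, where $x_1 = -v_1$, $x_2 = v_1$, $x_3 = v_1$. This system has a solution if and only if $T_1 > 0$, $T_2 < 0$, and $T_3 < 0$; moreover, the solution is unique up to scaling of $(v_1, v_2, v_3)$. -/

import Mathlib

lemma sys_poly {T1 T2 T3 v1 v2 v3 c : ℝ} (hv1 : 0 < v1) (hv2 : 0 < v2) (hv3 : 0 < v3)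
    (h1 : 2 * (v1 * v1) / (v2 * v3) = c * T1)
    (h2 : 2 * ((-v1) * v1) / (v1 * v3) = c * T2)
    (h3 : 2 * ((-v1) * v1) / (v1 * v2) = c * T3) :
    c * T1 * (v2 * v3) = 2 * (v1 * v1) ∧ c * T2 * v3 = -(2 * v1) ∧ c * T3 * v2 = -(2 * v1) := by
  have hv1' := hv1.ne'
  have hv2' := hv2.ne'
  have hv3' := hv3.ne'
  refine ⟨?_, ?_, ?_⟩
  · field_simp at h1; linear_combination -h1
  · field_simp at h2; apply mul_left_cancel₀ hv1'; linear_combination -v1 * h2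
  · field_simp at h3; apply mul_left_cancel₀ hv1'; linear_combination -v1 * h3

lemma sys_signs {T1 T2 T3 v1 v2 v3 c : ℝ} (hv1 : 0 < v1) (hv2 : 0 < v2) (hv3 : 0 < v3)
    (hc : 0 < c)
    (e1 : c * T1 * (v2 * v3) = 2 * (v1 * v1)) (e2 : c * T2 * v3 = -(2 * v1))
    (e3 : c * T3 * v2 = -(2 * v1)) : 0 < T1 ∧ T2 < 0 ∧ T3 < 0 := by
  refine ⟨?_, ?_, ?_⟩
  · nlinarith [mul_pos hv2 hv3, mul_pos hv1 hv1, mul_pos hc (mul_pos hv2 hv3)]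
  · nlinarith [mul_pos hc hv3]
  · nlinarith [mul_pos hc hv2]

lemma sys_key {T1 T2 T3 v1 v2 v3 c : ℝ} (hv1 : 0 < v1) (hv2 : 0 < v2) (hv3 : 0 < v3)
    (hc : 0 < c)
    (e1 : c * T1 * (v2 * v3) = 2 * (v1 * v1)) (e2 : c * T2 * v3 = -(2 * v1))
    (e3 : c * T3 * v2 = -(2 * v1)) : c * (T2 * T3) = 2 * T1 := by
  have hne : c * (v2 * v3) ≠ 0 := (mul_pos hc (mul_pos hv2 hv3)).ne'
  apply mul_right_cancel₀ hne
  linear_combination (c * T3 * v2) * e2 + (-(2 * v1)) * e3 - 2 * e1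

theorem stmt_17 (T1 T2 T3 : ℝ) :
    ((∃ v1 v2 v3 c : ℝ, 0 < v1 ∧ 0 < v2 ∧ 0 < v3 ∧ 0 < c ∧
        2 * (v1 * v1) / (v2 * v3) = c * T1 ∧
        2 * ((-v1) * v1) / (v1 * v3) = c * T2 ∧
        2 * ((-v1) * v1) / (v1 * v2) = c * T3) ↔
      (0 < T1 ∧ T2 < 0 ∧ T3 < 0)) ∧
    ∀ v1 v2 v3 c w1 w2 w3 c' : ℝ,
      (0 < v1 ∧ 0 < v2 ∧ 0 < v3 ∧ 0 < c ∧
        2 * (v1 * v1) / (v2 * v3) = c * T1 ∧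
        2 * ((-v1) * v1) / (v1 * v3) = c * T2 ∧
        2 * ((-v1) * v1) / (v1 * v2) = c * T3) →
      (0 < w1 ∧ 0 < w2 ∧ 0 < w3 ∧ 0 < c' ∧
        2 * (w1 * w1) / (w2 * w3) = c' * T1 ∧
        2 * ((-w1) * w1) / (w1 * w3) = c' * T2 ∧
        2 * ((-w1) * w1) / (w1 * w2) = c' * T3) →
      c = c' ∧ ∃ t : ℝ, 0 < t ∧ w1 = t * v1 ∧ w2 = t * v2 ∧ w3 = t * v3 := by
  constructor
  · constructor
    · rintro ⟨v1, v2, v3, c, hv1, hv2, hv3, hc, h1, h2, h3⟩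
      obtain ⟨e1, e2, e3⟩ := sys_poly hv1 hv2 hv3 h1 h2 h3
      exact sys_signs hv1 hv2 hv3 hc e1 e2 e3
    · rintro ⟨hT1, hT2, hT3⟩
      have hT23 : 0 < T2 * T3 := mul_pos_of_neg_of_neg hT2 hT3
      set c : ℝ := 2 * T1 / (T2 * T3) with hcdef
      have hc : 0 < c := div_pos (by linarith) hT23
      have hcT2 : c * T2 < 0 := mul_neg_of_pos_of_neg hc hT2
      have hcT3 : c * T3 < 0 := mul_neg_of_pos_of_neg hc hT3
      refine ⟨1, -2 / (c * T3), -2 / (c * T2), c, one_pos,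
        div_pos_of_neg_of_neg (by norm_num) hcT3,
        div_pos_of_neg_of_neg (by norm_num) hcT2, hc, ?_, ?_, ?_⟩
      · rw [hcdef]
        field_simp
      · field_simp
      · field_simp
  · rintro v1 v2 v3 c w1 w2 w3 c'
      ⟨hv1, hv2, hv3, hc, h1, h2, h3⟩ ⟨hw1, hw2, hw3, hc', g1, g2, g3⟩
    obtain ⟨e1, e2, e3⟩ := sys_poly hv1 hv2 hv3 h1 h2 h3
    obtain ⟨f1, f2, f3⟩ := sys_poly hw1 hw2 hw3 g1 g2 g3
    obtain ⟨hT1, hT2, hT3⟩ := sys_signs hv1 hv2 hv3 hc e1 e2 e3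
    have hT23 : 0 < T2 * T3 := mul_pos_of_neg_of_neg hT2 hT3
    have key := sys_key hv1 hv2 hv3 hc e1 e2 e3
    have key' := sys_key hw1 hw2 hw3 hc' f1 f2 f3
    have hcc : c = c' := by
      apply mul_right_cancel₀ hT23.ne'
      linear_combination key - key'
    subst hcc
    have hcT2 : c * T2 ≠ 0 := (mul_neg_of_pos_of_neg hc hT2).ne
    have hcT3 : c * T3 ≠ 0 := (mul_neg_of_pos_of_neg hc hT3).ne
    refine ⟨rfl, w1 / v1, div_pos hw1 hv1, ?_, ?_, ?_⟩
    · field_simp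
    · -- w2 * v1 = w1 * v2 from e3, f3
      have : c * T3 * (w2 * v1) = c * T3 * (w1 * v2) := by
        linear_combination v1 * f3 - w1 * e3
      have h := mul_left_cancel₀ hcT3 this
      field_simp
      linear_combination h
    · have : c * T2 * (w3 * v1) = c * T2 * (w1 * v3) := by
        linear_combination v1 * f2 - w1 * e2
      have h := mul_left_cancel₀ hcT2 this
      field_simp
      linear_combination h
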